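/- Let a, b, c, d be four distinct points on a common circle in the Euclidean plane such that b and c lie strictly on the same side of the line through a and d, and such that the unsigned angles satisfy ∠cad ≤ ∠bad ≤ ∠adc. Then |ac| + |cd| ≤ |ab| + |bd|. -/

import Mathlib

open EuclideanGeometry

private lemma sin_abs_of_abs_le_pi {x : ℝ} (h : |x| ≤ Real.pi) :
    Real.sin |x| = |Real.sin x| := by
  rcases abs_cases x with ⟨h1, h2⟩ | ⟨h1, h2⟩
  · rw [h1, abs_of_nonneg (Real.sin_nonneg_of_nonneg_of_le_pi h2 (h1 ▸ h))]
  · rw [h1, Real.sin_neg, abs_of_nonpos]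
    have hx : -x ≤ Real.pi := h1 ▸ h
    exact Real.sin_nonpos_of_nonpos_of_neg_pi_le h2.le (by linarith)

private lemma sin_sum_ineq {α β γ δ : ℝ} (hγ0 : 0 ≤ γ) (hγα : γ ≤ α) (hαδ : α ≤ δ)
    (hsum : α + β = γ + δ) (hπ : γ + δ ≤ Real.pi) :
    Real.sin γ + Real.sin δ ≤ Real.sin α + Real.sin β := by
  set s := γ + δ with hs
  have expand : ∀ t u : ℝ, Real.sin (t + u) + Real.sin (t - u)
      = 2 * Real.sin t * Real.cos u := by
    intro t u; rw [Real.sin_add, Real.sin_sub]; ring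
  have e1 : Real.sin γ + Real.sin δ = 2 * Real.sin (s/2) * Real.cos (γ - s/2) := by
    have := expand (s/2) (γ - s/2)
    rw [show s/2 + (γ - s/2) = γ by ring, show s/2 - (γ - s/2) = δ by rw [hs]; ring] at this
    exact this
  have e2 : Real.sin α + Real.sin β = 2 * Real.sin (s/2) * Real.cos (α - s/2) := by
    have := expand (s/2) (α - s/2)
    rw [show s/2 + (α - s/2) = α by ring,
      show s/2 - (α - s/2) = β by simp only [hs]; linarith] at this
    exact this
  rw [e1, e2]
  have hsin : 0 ≤ Real.sin (s/2) := by
    apply Real.sin_nonneg_of_nonneg_of_le_pi <;> [skip; linarith]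
    linarith
  have hcos : Real.cos (γ - s/2) ≤ Real.cos (α - s/2) := by
    have h2γ : 2 * γ ≤ s := by rw [hs]; linarith
    have habs : |α - s/2| ≤ |γ - s/2| := by
      rw [abs_le, abs_of_nonpos (by linarith : γ - s/2 ≤ 0)]
      constructor <;> linarith
    calc Real.cos (γ - s/2) = Real.cos |γ - s/2| := (Real.cos_abs _).symm
      _ ≤ Real.cos |α - s/2| := by
          apply Real.cos_le_cos_of_nonneg_of_le_pi (abs_nonneg _) _ habs
          rw [abs_of_nonpos (by linarith : γ - s/2 ≤ 0)]
          linarith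
      _ = Real.cos (α - s/2) := Real.cos_abs _
  nlinarith [hsin, hcos]

private lemma chord {V : Type*} [NormedAddCommGroup V] [InnerProductSpace ℝ V]
    [Fact (Module.finrank ℝ V = 2)] [Module.Oriented ℝ V (Fin 2)]
    {s : EuclideanGeometry.Sphere V} {p₁ p₂ p₃ : V} (h₁ : p₁ ∈ s) (h₂ : p₂ ∈ s) (h₃ : p₃ ∈ s)
    (h₁₂ : p₁ ≠ p₂) (h₁₃ : p₁ ≠ p₃) (h₂₃ : p₂ ≠ p₃) :
    dist p₁ p₃ = 2 * s.radius * Real.sin (∠ p₁ p₂ p₃) := by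
  have h := EuclideanGeometry.Sphere.dist_div_sin_oangle_eq_two_mul_radius h₁ h₂ h₃ h₁₂ h₁₃ h₂₃
  have hang : ∠ p₁ p₂ p₃ = |(∡ p₁ p₂ p₃).toReal| :=
    EuclideanGeometry.angle_eq_abs_oangle_toReal h₁₂ h₂₃.symm
  have hsin : Real.sin (∠ p₁ p₂ p₃) = |Real.Angle.sin (∡ p₁ p₂ p₃)| := by
    rw [hang, sin_abs_of_abs_le_pi (Real.Angle.abs_toReal_le_pi _)]
    congr 1
    rw [← Real.Angle.sin_coe, Real.Angle.coe_toReal]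
  have hne : |Real.Angle.sin (∡ p₁ p₂ p₃)| ≠ 0 := by
    intro h0
    rw [h0, div_zero] at h
    have h1' : dist p₁ s.center = s.radius := EuclideanGeometry.mem_sphere.1 h₁
    have h3' : dist p₃ s.center = s.radius := EuclideanGeometry.mem_sphere.1 h₃
    have : dist p₁ p₃ = 0 := by
      have := dist_triangle p₁ s.center p₃
      have := dist_nonneg (x := p₁) (y := p₃)
      rw [dist_comm s.center p₃] at *
      linarith
    exact h₁₃ (dist_eq_zero.1 this)
  rw [hsin]
  exact (div_eq_iff hne).1 h

/-- If `a`, `b`, `c`, `d` are four distinct points on a common circle such that `b` and `c`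
lie strictly on the same side of the line through `a` and `d`, and the unsigned angles
satisfy `∠ c a d ≤ ∠ b a d ≤ ∠ a d c`, then `|ac| + |cd| ≤ |ab| + |bd|`. -/
theorem four_points_on_circle_path_le
    (a b c d o : EuclideanSpace ℝ (Fin 2)) (r : ℝ) (hr : 0 < r)
    (ha : dist a o = r) (hb : dist b o = r) (hc : dist c o = r) (hd : dist d o = r)
    (hab : a ≠ b) (hac : a ≠ c) (had : a ≠ d)
    (hbc : b ≠ c) (hbd : b ≠ d) (hcd : c ≠ d)
    (hside : (affineSpan ℝ ({a, d} : Set (EuclideanSpace ℝ (Fin 2)))).SSameSide b c)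
    (h1 : ∠ c a d ≤ ∠ b a d) (h2 : ∠ b a d ≤ ∠ a d c) :
    dist a c + dist c d ≤ dist a b + dist b d := by
  haveI : Fact (Module.finrank ℝ (EuclideanSpace ℝ (Fin 2)) = 2) := ⟨finrank_euclideanSpace_fin⟩
  haveI : Module.Oriented ℝ (EuclideanSpace ℝ (Fin 2)) (Fin 2) :=
    ⟨(EuclideanSpace.basisFun (Fin 2) ℝ).toBasis.orientation⟩
  have haS : a ∈ (⟨o, r⟩ : EuclideanGeometry.Sphere (EuclideanSpace ℝ (Fin 2))) :=
    EuclideanGeometry.mem_sphere.2 ha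
  have hbS : b ∈ (⟨o, r⟩ : EuclideanGeometry.Sphere (EuclideanSpace ℝ (Fin 2))) :=
    EuclideanGeometry.mem_sphere.2 hb
  have hcS : c ∈ (⟨o, r⟩ : EuclideanGeometry.Sphere (EuclideanSpace ℝ (Fin 2))) :=
    EuclideanGeometry.mem_sphere.2 hc
  have hdS : d ∈ (⟨o, r⟩ : EuclideanGeometry.Sphere (EuclideanSpace ℝ (Fin 2))) :=
    EuclideanGeometry.mem_sphere.2 hd
  have hbspan : b ∉ affineSpan ℝ ({a, d} : Set (EuclideanSpace ℝ (Fin 2))) := hside.2.1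
  have hcspan : c ∉ affineSpan ℝ ({a, d} : Set (EuclideanSpace ℝ (Fin 2))) := hside.2.2
  have hncol : ∀ (s : Set (EuclideanSpace ℝ (Fin 2))) (p : EuclideanSpace ℝ (Fin 2)),
      a ∈ s → d ∈ s → p ∈ s → p ∉ affineSpan ℝ ({a, d} : Set (EuclideanSpace ℝ (Fin 2))) →
      ¬ Collinear ℝ s :=
    fun s p has hds hps hp h => hp (h.mem_affineSpan_of_mem_of_ne has hds hps had)
  -- inscribed angles at b and at c are equal
  have h2z : (2 : ℤ) • ∡ a b d = (2 : ℤ) • ∡ a c d :=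
    EuclideanGeometry.Sphere.two_zsmul_oangle_eq haS hbS hcS hdS hab.symm hbd hac.symm hcd
  have hsign : (∡ a c d).sign = (∡ a b d).sign :=
    AffineSubspace.SSameSide.oangle_sign_eq (mem_affineSpan ℝ (by simp))
      (mem_affineSpan ℝ (by simp)) hside
  have hsb : (∡ a b d).sign ≠ 0 := by
    rw [Ne, EuclideanGeometry.oangle_sign_eq_zero_iff_collinear]
    exact hncol _ b (by simp) (by simp) (by simp) hbspan
  have habd_acd : ∡ a b d = ∡ a c d := by
    rcases Real.Angle.two_zsmul_eq_iff.1 h2z with h | h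
    · exact h
    · exfalso
      have h' : (∡ a b d).sign = -(∡ a c d).sign := by rw [h, Real.Angle.sign_add_pi]
      rw [hsign] at h'
      cases hx : (∡ a b d).sign <;> rw [hx] at h' hsb <;> simp_all
  have hangle_eq : ∠ a b d = ∠ a c d := by
    rw [EuclideanGeometry.angle_eq_abs_oangle_toReal hab hbd.symm,
      EuclideanGeometry.angle_eq_abs_oangle_toReal hac hcd.symm, habd_acd]
  -- triangle angle sums
  have e1 : ∠ a b d + ∠ b d a + ∠ d a b = Real.pi :=
    EuclideanGeometry.angle_add_angle_add_angle_eq_pi d hab.symm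
  have e2 : ∠ a c d + ∠ c d a + ∠ d a c = Real.pi :=
    EuclideanGeometry.angle_add_angle_add_angle_eq_pi d hac.symm
  rw [EuclideanGeometry.angle_comm b d a, EuclideanGeometry.angle_comm d a b] at e1
  rw [EuclideanGeometry.angle_comm c d a, EuclideanGeometry.angle_comm d a c] at e2
  have hsum : ∠ b a d + ∠ a d b = ∠ c a d + ∠ a d c := by linarith
  have hπ : ∠ c a d + ∠ a d c ≤ Real.pi := by
    have := EuclideanGeometry.angle_nonneg a c d
    linarith
  -- chord lengths
  have eac : dist a c = 2 * r * Real.sin (∠ a d c) := chord haS hdS hcS had hac hcd.symm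
  have ecd : dist c d = 2 * r * Real.sin (∠ c a d) := chord hcS haS hdS hac.symm hcd had
  have eab : dist a b = 2 * r * Real.sin (∠ a d b) := chord haS hdS hbS had hab hbd.symm
  have ebd : dist b d = 2 * r * Real.sin (∠ b a d) := chord hbS haS hdS hab.symm hbd had
  rw [eac, ecd, eab, ebd]
  have key := sin_sum_ineq (EuclideanGeometry.angle_nonneg c a d) h1 h2 hsum hπ
  nlinarith [key, hr]
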